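/- Let q : ℝ → ℝ³ be a smooth curve such that I := det(q, q', q'') is nowhere zero and J := det(q', q'', q''') satisfies J(t) + I(t)² = 0 for all t. Then the curve p(t) := I(t)⁻¹ (q'(t) × q''(t)) satisfies p(t) · q(t) = 1 and p'(t) = q(t) × q'(t) for all t. -/

import Mathlib

open Matrix

/-- Scalar triple product on ℝ³. -/
def det3 (u v w : Fin 3 → ℝ) : ℝ := u ⬝ᵥ (v ⨯₃ w)

lemma det3_expand (u v w : Fin 3 → ℝ) :
    det3 u v w = u 0 * (v 1 * w 2 - v 2 * w 1) + u 1 * (v 2 * w 0 - v 0 * w 2)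
      + u 2 * (v 0 * w 1 - v 1 * w 0) := by
  simp [det3, crossProduct, dotProduct, Fin.sum_univ_three]

lemma key_identity (u v w x : Fin 3 → ℝ) :
    det3 u v w • (v ⨯₃ x) = det3 v w x • (v ⨯₃ u) + det3 u v x • (v ⨯₃ w) := by
  funext i
  fin_cases i <;>
    simp [det3_expand, crossProduct, Pi.smul_apply, smul_eq_mul] <;> ring

lemma hasDerivAt_det3 {u v w : ℝ → Fin 3 → ℝ} {u' v' w' : Fin 3 → ℝ} {t : ℝ}
    (hu : HasDerivAt u u' t) (hv : HasDerivAt v v' t) (hw : HasDerivAt w w' t) :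
    HasDerivAt (fun s => det3 (u s) (v s) (w s))
      (det3 u' (v t) (w t) + det3 (u t) v' (w t) + det3 (u t) (v t) w') t := by
  have hu' := hasDerivAt_pi.mp hu
  have hv' := hasDerivAt_pi.mp hv
  have hw' := hasDerivAt_pi.mp hw
  have H : HasDerivAt (fun s => (u s 0) * ((v s 1) * (w s 2) - (v s 2) * (w s 1))
      + (u s 1) * ((v s 2) * (w s 0) - (v s 0) * (w s 2))
      + (u s 2) * ((v s 0) * (w s 1) - (v s 1) * (w s 0)))
      (u' 0 * (v t 1 * w t 2 - v t 2 * w t 1)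
        + u t 0 * ((v' 1 * w t 2 + v t 1 * w' 2) - (v' 2 * w t 1 + v t 2 * w' 1))
      + (u' 1 * (v t 2 * w t 0 - v t 0 * w t 2)
        + u t 1 * ((v' 2 * w t 0 + v t 2 * w' 0) - (v' 0 * w t 2 + v t 0 * w' 2)))
      + (u' 2 * (v t 0 * w t 1 - v t 1 * w t 0)
        + u t 2 * ((v' 0 * w t 1 + v t 0 * w' 1) - (v' 1 * w t 0 + v t 1 * w' 0)))) t := by
    exact (((hu' 0).mul (((hv' 1).mul (hw' 2)).sub ((hv' 2).mul (hw' 1)))).add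
      ((hu' 1).mul (((hv' 2).mul (hw' 0)).sub ((hv' 0).mul (hw' 2))))).add
      ((hu' 2).mul (((hv' 0).mul (hw' 1)).sub ((hv' 1).mul (hw' 0))))
  have h1 : (fun s => det3 (u s) (v s) (w s)) = (fun s =>
      (u s 0) * ((v s 1) * (w s 2) - (v s 2) * (w s 1))
      + (u s 1) * ((v s 2) * (w s 0) - (v s 0) * (w s 2))
      + (u s 2) * ((v s 0) * (w s 1) - (v s 1) * (w s 0))) := by
    funext s; exact det3_expand _ _ _
  rw [h1]
  convert H using 1
  simp only [det3_expand]
  ring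

lemma hasDerivAt_cross {v w : ℝ → Fin 3 → ℝ} {v' w' : Fin 3 → ℝ} {t : ℝ}
    (hv : HasDerivAt v v' t) (hw : HasDerivAt w w' t) :
    HasDerivAt (fun s => v s ⨯₃ w s) (v' ⨯₃ w t + v t ⨯₃ w') t := by
  have hv' := hasDerivAt_pi.mp hv
  have hw' := hasDerivAt_pi.mp hw
  refine hasDerivAt_pi.mpr fun i => ?_
  fin_cases i
  · simp only [crossProduct, LinearMap.mk₂_apply, Matrix.cons_val_zero, Matrix.cons_val_one,
      Matrix.head_cons, Matrix.head_fin_const, Pi.add_apply, Matrix.cons_val_fin_one,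
      Fin.isValue, Matrix.cons_val_two, Matrix.tail_cons]
    convert (((hv' 1).fun_mul (hw' 2)).fun_sub ((hv' 2).fun_mul (hw' 1))) using 1
    simp only [Fin.zero_eta, Fin.mk_one, Matrix.cons_val_zero, Matrix.cons_val_one,
      Matrix.head_cons, Matrix.cons_val_two, Matrix.tail_cons, Fin.reduceFinMk, Matrix.cons_val]
    simp only [Fin.mk_zero', Fin.mk_one, Fin.reduceFinMk, Matrix.cons_val, Matrix.cons_val_zero,
      Matrix.cons_val_one]
    ring
  · simp only [crossProduct, LinearMap.mk₂_apply, Matrix.cons_val_zero, Matrix.cons_val_one,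
      Matrix.head_cons, Matrix.head_fin_const, Pi.add_apply, Matrix.cons_val_fin_one,
      Fin.isValue, Matrix.cons_val_two, Matrix.tail_cons]
    convert (((hv' 2).fun_mul (hw' 0)).fun_sub ((hv' 0).fun_mul (hw' 2))) using 1
    simp only [Fin.zero_eta, Fin.mk_one, Matrix.cons_val_zero, Matrix.cons_val_one,
      Matrix.head_cons, Matrix.cons_val_two, Matrix.tail_cons, Fin.reduceFinMk, Matrix.cons_val]
    simp only [Fin.mk_zero', Fin.mk_one, Fin.reduceFinMk, Matrix.cons_val, Matrix.cons_val_zero,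
      Matrix.cons_val_one]
    ring
  · simp only [crossProduct, LinearMap.mk₂_apply, Matrix.cons_val_zero, Matrix.cons_val_one,
      Matrix.head_cons, Matrix.head_fin_const, Pi.add_apply, Matrix.cons_val_fin_one,
      Fin.isValue, Matrix.cons_val_two, Matrix.tail_cons]
    convert (((hv' 0).fun_mul (hw' 1)).fun_sub ((hv' 1).fun_mul (hw' 0))) using 1
    simp only [Fin.zero_eta, Fin.mk_one, Matrix.cons_val_zero, Matrix.cons_val_one,
      Matrix.head_cons, Matrix.cons_val_two, Matrix.tail_cons, Fin.reduceFinMk, Matrix.cons_val]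
    simp only [Fin.mk_zero', Fin.mk_one, Fin.reduceFinMk, Matrix.cons_val, Matrix.cons_val_zero,
      Matrix.cons_val_one]
    ring

/-- If a nondegenerate space curve `q` satisfies `J + I² = 0`, then
`p := I⁻¹ (q' × q'')` solves the Cartan–Engel system `p ⬝ᵥ q = 1`, `p' = q × q'`. -/
theorem centroaffine_torsion_to_system (q : ℝ → Fin 3 → ℝ)
    (hq : ContDiff ℝ (⊤ : ℕ∞) q)
    (hI : ∀ t, det3 (q t) (deriv q t) (deriv (deriv q) t) ≠ 0)
    (hJ : ∀ t, det3 (deriv q t) (deriv (deriv q) t) (deriv (deriv (deriv q)) t)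
        + (det3 (q t) (deriv q t) (deriv (deriv q) t)) ^ 2 = 0) :
    (∀ t, ((det3 (q t) (deriv q t) (deriv (deriv q) t))⁻¹ •
        (deriv q t ⨯₃ deriv (deriv q) t)) ⬝ᵥ q t = 1) ∧
    ∀ t, deriv (fun s => (det3 (q s) (deriv q s) (deriv (deriv q) s))⁻¹ •
        (deriv q s ⨯₃ deriv (deriv q) s)) t
      = q t ⨯₃ deriv q t := by
  set q1 := deriv q with hq1def
  set q2 := deriv q1 with hq2def
  set q3 := deriv q2 with hq3def
  have hq1 : ContDiff ℝ (⊤ : ℕ∞) q1 := (contDiff_infty_iff_deriv.mp hq).2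
  have hq2 : ContDiff ℝ (⊤ : ℕ∞) q2 := (contDiff_infty_iff_deriv.mp hq1).2
  have hDq : ∀ t, HasDerivAt q (q1 t) t := fun t =>
    (hq.differentiable (by simp) t).hasDerivAt
  have hDq1 : ∀ t, HasDerivAt q1 (q2 t) t := fun t =>
    (hq1.differentiable (by simp) t).hasDerivAt
  have hDq2 : ∀ t, HasDerivAt q2 (q3 t) t := fun t =>
    (hq2.differentiable (by simp) t).hasDerivAt
  set I : ℝ → ℝ := fun s => det3 (q s) (q1 s) (q2 s) with hIdef
  -- first part
  have part1 : ∀ t, ((I t)⁻¹ • (q1 t ⨯₃ q2 t)) ⬝ᵥ q t = 1 := by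
    intro t
    have h1 : (q1 t ⨯₃ q2 t) ⬝ᵥ q t = I t := by
      simp only [hIdef, det3_expand, crossProduct, dotProduct, Fin.sum_univ_three,
        LinearMap.mk₂_apply]
      simp [Matrix.cons_val_zero, Matrix.cons_val_one]
      ring
    rw [smul_dotProduct, h1, smul_eq_mul, inv_mul_cancel₀ (hI t)]
  refine ⟨part1, fun t => ?_⟩
  -- derivative of I
  have hDI : HasDerivAt I (det3 (q t) (q1 t) (q3 t)) t := by
    have := hasDerivAt_det3 (hDq t) (hDq1 t) (hDq2 t)
    have e1 : det3 (q1 t) (q1 t) (q2 t) = 0 := dot_self_cross _ _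
    have e2 : det3 (q t) (q2 t) (q2 t) = by exact (0 : ℝ) := by
      simp [det3, cross_self]
    simpa [e1, e2] using this
  -- derivative of the cross product
  have hDc : HasDerivAt (fun s => q1 s ⨯₃ q2 s) (q1 t ⨯₃ q3 t) t := by
    have := hasDerivAt_cross (hDq1 t) (hDq2 t)
    simpa [cross_self] using this
  set D : ℝ := det3 (q t) (q1 t) (q3 t)
  have hDp : HasDerivAt (fun s => (I s)⁻¹ • (q1 s ⨯₃ q2 s))
      ((I t)⁻¹ • (q1 t ⨯₃ q3 t) + (-(D) / I t ^ 2) • (q1 t ⨯₃ q2 t)) t :=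
    (hDI.inv (hI t)).smul hDc
  rw [hDp.deriv]
  -- algebraic identity
  have hJ' : det3 (q1 t) (q2 t) (q3 t) = -(I t) ^ 2 := by
    have := hJ t; linarith [hJ t]
  have hIt : I t ≠ 0 := hI t
  have key : I t • (q1 t ⨯₃ q3 t)
      = det3 (q1 t) (q2 t) (q3 t) • (q1 t ⨯₃ q t) + D • (q1 t ⨯₃ q2 t) :=
    key_identity (q t) (q1 t) (q2 t) (q3 t)
  have hI2 : (I t) ^ 2 ≠ 0 := pow_ne_zero _ hIt
  have main : (I t) ^ 2 • ((I t)⁻¹ • (q1 t ⨯₃ q3 t) + (-(D) / I t ^ 2) • (q1 t ⨯₃ q2 t))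
      = (I t) ^ 2 • (q t ⨯₃ q1 t) := by
    have expand : (I t) ^ 2 • ((I t)⁻¹ • (q1 t ⨯₃ q3 t) + (-(D) / I t ^ 2) • (q1 t ⨯₃ q2 t))
        = (I t) • (q1 t ⨯₃ q3 t) + (-(D)) • (q1 t ⨯₃ q2 t) := by
      rw [smul_add, smul_smul, smul_smul]
      congr 2
      · field_simp [hIt]
      · field_simp [hIt]
    rw [expand, key, hJ', ← cross_anticomm (q t) (q1 t)]
    module
  exact smul_right_injective _ hI2 main
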